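/- Let K and Q be n×n real matrices such that det(I + K S) = det(I + Q S) for all diagonal matrices S with strictly positive diagonal entries. Then for every subset I of {1,...,n}, the principal submatrices satisfy det(K_I) = det(Q_I). -/

import Mathlib

open Matrix Finset Polynomial

/-- The determinant of a matrix which agrees with `M` on rows in `J` and with the identity
on rows outside `J` equals the principal minor of `M` on `J`. -/
lemma det_piecewise_rows {n : ℕ} (M : Matrix (Fin n) (Fin n) ℝ) (J : Finset (Fin n)) :
    (Matrix.of (fun i j => if i ∈ J then M i j else (1 : Matrix (Fin n) (Fin n) ℝ) i j)).det
      = (M.submatrix (fun i : J => (i : Fin n)) (fun i : J => (i : Fin n))).det := by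
  classical
  set A : Matrix (Fin n) (Fin n) ℝ :=
    Matrix.of (fun i j => if i ∈ J then M i j else (1 : Matrix (Fin n) (Fin n) ℝ) i j) with hA
  let e : {x : Fin n // x ∈ J} ⊕ {x : Fin n // ¬ x ∈ J} ≃ Fin n := Equiv.sumCompl (· ∈ J)
  have h1 : A.det = (A.submatrix e e).det := (Matrix.det_submatrix_equiv_self e A).symm
  have h2 : A.submatrix e e =
      Matrix.fromBlocks (M.submatrix (fun i : J => (i : Fin n)) (fun i : J => (i : Fin n)))
        (M.submatrix (fun i : J => (i : Fin n)) (fun i : {x : Fin n // ¬ x ∈ J} => (i : Fin n)))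
        0 1 := by
    ext i j
    cases i with
    | inl i =>
      cases j with
      | inl j => simp [A, e, i.2]
      | inr j => simp [A, e, i.2]
    | inr i =>
      cases j with
      | inl j =>
        have : (i : Fin n) ≠ (j : Fin n) := by
          intro hij
          exact i.2 (hij ▸ j.2)
        simp [A, e, i.2, Matrix.one_apply, this]
      | inr j =>
        by_cases hij : i = j
        · subst hij; simp [A, e, i.2, Matrix.one_apply]
        · have : (i : Fin n) ≠ (j : Fin n) := fun hh => hij (Subtype.ext hh)
          simp [A, e, i.2, Matrix.one_apply, this, hij]
  rw [h1, h2, Matrix.det_fromBlocks_zero₂₁, Matrix.det_one, mul_one]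

/-- Expansion of `det (1 + diagonal s * M)` as a sum over principal minors. -/
lemma det_one_add_diagonal_mul {n : ℕ} (M : Matrix (Fin n) (Fin n) ℝ) (s : Fin n → ℝ) :
    (1 + Matrix.diagonal s * M).det
      = ∑ J : Finset (Fin n), (∏ i ∈ J, s i) *
          (M.submatrix (fun i : J => (i : Fin n)) (fun i : J => (i : Fin n))).det := by
  classical
  let f := (Matrix.detRowAlternating : (Fin n → ℝ) [⋀^Fin n]→ₗ[ℝ] ℝ).toMultilinearMap
  have h0 : (1 + Matrix.diagonal s * M).det
      = f ((fun i => s i • M i) + (fun i => (1 : Matrix (Fin n) (Fin n) ℝ) i)) := by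
    show (1 + Matrix.diagonal s * M).det = Matrix.detRowAlternating _
    congr 1
    ext i j
    simp [Matrix.diagonal_mul, add_comm, mul_comm]
  rw [h0, f.map_add_univ]
  refine Finset.sum_congr rfl fun J _ => ?_
  have hpw : (J.piecewise (fun i => s i • M i) (fun i => (1 : Matrix (Fin n) (Fin n) ℝ) i))
      = J.piecewise (fun i => s i • (J.piecewise M (fun i => (1 : Matrix (Fin n) (Fin n) ℝ) i)) i)
          (J.piecewise M (fun i => (1 : Matrix (Fin n) (Fin n) ℝ) i)) := by
    ext i j
    by_cases hi : i ∈ J <;> simp [Finset.piecewise, hi]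
  rw [hpw, f.map_piecewise_smul]
  have : f (J.piecewise M (fun i => (1 : Matrix (Fin n) (Fin n) ℝ) i))
      = (M.submatrix (fun i : J => (i : Fin n)) (fun i : J => (i : Fin n))).det := by
    rw [← det_piecewise_rows M J]
    show Matrix.detRowAlternating _ = Matrix.detRowAlternating _
    congr 1
    ext i j
    by_cases hi : i ∈ J <;> simp [Finset.piecewise, hi]
  rw [this]
  rfl

lemma weight_injective {n : ℕ} :
    Function.Injective (fun J : Finset (Fin n) => ∑ i ∈ J, 2 ^ (i : ℕ)) := by
  intro J J' hJ
  have him : ∀ J : Finset (Fin n), ∑ i ∈ J, 2 ^ (i : ℕ) = ∑ k ∈ J.image Fin.val, 2 ^ k := by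
    intro J
    rw [Finset.sum_image (fun a _ b _ hab => Fin.val_injective hab)]
  have h2 : (fun s : Colex (Finset ℕ) => ∑ k ∈ ofColex s, 2 ^ k)
      (toColex (J.image Fin.val))
      = (fun s : Colex (Finset ℕ) => ∑ k ∈ ofColex s, 2 ^ k)
      (toColex (J'.image Fin.val)) := by
    simpa [← him] using hJ
  have h3 := (Finset.geomSum_ofColex_strictMono (le_refl 2)).injective h2
  have h4 : J.image Fin.val = J'.image Fin.val := toColex_inj.1 h3
  exact Finset.image_injective Fin.val_injective h4

theorem principal_minors_eq (n : ℕ) (K Q : Matrix (Fin n) (Fin n) ℝ)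
    (h : ∀ s : Fin n → ℝ, (∀ i, 0 < s i) →
      (1 + K * Matrix.diagonal s).det = (1 + Q * Matrix.diagonal s).det) :
    ∀ I : Finset (Fin n),
      (K.submatrix (fun i : I => (i : Fin n)) (fun i : I => (i : Fin n))).det =
      (Q.submatrix (fun i : I => (i : Fin n)) (fun i : I => (i : Fin n))).det := by
  classical
  intro I
  set a : Finset (Fin n) → ℝ := fun J =>
    (K.submatrix (fun i : J => (i : Fin n)) (fun i : J => (i : Fin n))).det with ha
  set b : Finset (Fin n) → ℝ := fun J =>
    (Q.submatrix (fun i : J => (i : Fin n)) (fun i : J => (i : Fin n))).det with hb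
  set w : Finset (Fin n) → ℕ := fun J => ∑ i ∈ J, 2 ^ (i : ℕ) with hw
  set P : Polynomial ℝ := ∑ J : Finset (Fin n), Polynomial.C (a J) * Polynomial.X ^ w J with hP
  set P' : Polynomial ℝ := ∑ J : Finset (Fin n), Polynomial.C (b J) * Polynomial.X ^ w J with hP'
  have heval : ∀ t : ℝ, 0 < t → P.eval t = P'.eval t := by
    intro t ht
    have hs : ∀ i : Fin n, 0 < t ^ (2 ^ (i : ℕ)) := fun i => pow_pos ht _
    have hdet := h (fun i : Fin n => t ^ (2 ^ (i : ℕ))) hs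
    have hK : (1 + K * Matrix.diagonal (fun i : Fin n => t ^ (2 ^ (i : ℕ)))).det
        = (1 + Matrix.diagonal (fun i : Fin n => t ^ (2 ^ (i : ℕ))) * K).det :=
      Matrix.det_one_add_mul_comm K (Matrix.diagonal _)
    have hQ : (1 + Q * Matrix.diagonal (fun i : Fin n => t ^ (2 ^ (i : ℕ)))).det
        = (1 + Matrix.diagonal (fun i : Fin n => t ^ (2 ^ (i : ℕ))) * Q).det :=
      Matrix.det_one_add_mul_comm Q (Matrix.diagonal _)
    have hprod : ∀ J : Finset (Fin n), (∏ i ∈ J, t ^ (2 ^ (i : ℕ))) = t ^ w J := by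
      intro J
      rw [hw]
      exact Finset.prod_pow_eq_pow_sum J _ t
    have hevP : P.eval t = (1 + Matrix.diagonal (fun i : Fin n => t ^ (2 ^ (i : ℕ))) * K).det := by
      rw [det_one_add_diagonal_mul, hP, Polynomial.eval_finset_sum]
      refine Finset.sum_congr rfl fun J _ => ?_
      rw [Polynomial.eval_mul, Polynomial.eval_C, Polynomial.eval_pow, Polynomial.eval_X,
        hprod J]
      exact mul_comm _ _
    have hevP' : P'.eval t = (1 + Matrix.diagonal (fun i : Fin n => t ^ (2 ^ (i : ℕ))) * Q).det := by
      rw [det_one_add_diagonal_mul, hP', Polynomial.eval_finset_sum]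
      refine Finset.sum_congr rfl fun J _ => ?_
      rw [Polynomial.eval_mul, Polynomial.eval_C, Polynomial.eval_pow, Polynomial.eval_X,
        hprod J]
      exact mul_comm _ _
    rw [hevP, hevP', ← hK, ← hQ, hdet]
  have hPP' : P = P' := by
    apply Polynomial.eq_of_infinite_eval_eq
    apply Set.Infinite.mono (s := Set.Ioi (0 : ℝ))
    · exact fun t ht => heval t ht
    · exact Set.Ioi_infinite 0
  have hcoeff : ∀ (c : Finset (Fin n) → ℝ) (J : Finset (Fin n)),
      (∑ J' : Finset (Fin n), Polynomial.C (c J') * Polynomial.X ^ w J').coeff (w J) = c J := by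
    intro c J
    rw [Polynomial.finset_sum_coeff]
    have : ∀ J' : Finset (Fin n),
        (Polynomial.C (c J') * Polynomial.X ^ w J').coeff (w J)
          = if J = J' then c J' else 0 := by
      intro J'
      rw [Polynomial.coeff_C_mul_X_pow]
      congr 1
      simp only [eq_iff_iff]
      constructor
      · intro hww; exact weight_injective hww
      · intro hJJ; rw [hJJ]
    rw [Finset.sum_congr rfl fun J' _ => this J']
    simp
  have := hcoeff a I
  rw [← hP, hPP', hP'] at this
  rw [hcoeff b I] at this
  exact this.symm
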